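/- Let M = ([n], I) be a matroid with set of bases B, and let A, B ∈ B. Then there exists a bijection β : A → B such that for all a ∈ A, (A \ {a}) ∪ {β(a)} ∈ B, and β is the identity on A ∩ B. -/

import Mathlib

/-- A matroid on the ground set `[n]`, given by its independent sets. -/
structure FinMatroid (n : ℕ) where
  Indep : Finset (Fin n) → Prop
  empty_indep : Indep ∅
  indep_subset : ∀ ⦃A B : Finset (Fin n)⦄, Indep A → B ⊆ A → Indep B
  exchange : ∀ ⦃A B : Finset (Fin n)⦄, Indep A → Indep B → B.card < A.card →
    ∃ x ∈ A \ B, Indep (insert x B)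

/-- A basis is a maximal independent set. -/
def FinMatroid.IsBasis {n : ℕ} (M : FinMatroid n) (A : Finset (Fin n)) : Prop :=
  M.Indep A ∧ ∀ B : Finset (Fin n), M.Indep B → A ⊆ B → A = B



open Set

namespace BrualdiAux

variable {α : Type*} [DecidableEq α] {M : Matroid α} {A B : Set α} {a : α}

/-- Claim 1: `a` lies in the closure of the set of `b ∈ B` whose removal kills spanning of `a`. -/
lemma mem_closure_good (hA : M.IsBase A) (hB : M.IsBase B) (hfin : B.Finite) (ha : a ∈ A \ B) :
    a ∈ M.closure {b ∈ B | a ∉ M.closure (B \ {b})} := by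
  have key : ∀ S : Finset α, ↑S ⊆ {b ∈ B | a ∈ M.closure (B \ {b})} →
      a ∈ M.closure (B \ ↑S) := by
    intro S
    induction S using Finset.induction with
    | empty =>
      intro _
      simp only [Finset.coe_empty, diff_empty]
      rw [hB.closure_eq]
      exact hA.subset_ground ha.1
    | @insert b S' hb ih =>
      intro hsub
      have hbB : b ∈ B ∧ a ∈ M.closure (B \ {b}) := by
        have := hsub (Finset.mem_coe.2 (Finset.mem_insert_self b S'))
        simpa using this
      have hS' : a ∈ M.closure (B \ ↑S') :=
        ih (fun x hx => hsub (by simp [hx]))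
      set X := (B \ ↑S') \ {b} with hX
      have hXeq : B \ ↑(insert b S') = X := by
        ext x; simp [hX]; tauto
      rw [hXeq]
      by_contra hnot
      have hbX : b ∉ X := by simp [hX]
      have hins : insert b X = B \ ↑S' := by
        rw [hX, insert_diff_singleton, insert_eq_of_mem]
        exact ⟨hbB.1, fun h => hb (by exact_mod_cast h)⟩
      have hmem : a ∈ M.closure (insert b X) \ M.closure X := by
        rw [hins]; exact ⟨hS', hnot⟩
      have hb' : b ∈ M.closure (insert a X) \ M.closure X := M.closure_exchange hmem
      have hsub2 : M.closure (insert a X) ⊆ M.closure (insert a (B \ {b})) :=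
        M.closure_subset_closure (insert_subset_insert (by rw [hX]; exact diff_subset_diff_left diff_subset))
      have : b ∈ M.closure (B \ {b}) := by
        have h2 := hsub2 hb'.1
        rwa [Matroid.closure_insert_eq_of_mem_closure hbB.2] at h2
      exact hB.indep.notMem_closure_diff_of_mem hbB.1 this
  have hBa : {b ∈ B | a ∈ M.closure (B \ {b})}.Finite := hfin.subset (sep_subset _ _)
  have := key hBa.toFinset (by simp [Set.Finite.coe_toFinset])
  have heq : B \ ↑hBa.toFinset = {b ∈ B | a ∉ M.closure (B \ {b})} := by
    ext x
    simp only [Set.Finite.coe_toFinset, mem_diff, mem_setOf_eq, mem_sep_iff]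
    tauto
  rwa [heq] at this

/-- Strong basis exchange. -/
lemma strong_exchange (hA : M.IsBase A) (hB : M.IsBase B) (hBfin : B.Finite)
    (ha : a ∈ A \ B) :
    ∃ b ∈ B \ A, M.IsBase (insert b (A \ {a})) ∧ M.IsBase (insert a (B \ {b})) := by
  have hclA : a ∉ M.closure (A \ {a}) := hA.indep.notMem_closure_diff_of_mem ha.1
  have hT : ¬ ({b ∈ B | a ∉ M.closure (B \ {b})} ⊆ M.closure (A \ {a})) := by
    intro hsub
    exact hclA (M.closure_subset_closure_of_subset_closure hsub
      (mem_closure_good hA hB hBfin ha))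
  rw [Set.not_subset] at hT
  obtain ⟨b, ⟨hbB, hbcl⟩, hbA⟩ := hT
  have hbne : b ∉ A := by
    intro hbmem
    have hba : b ≠ a := fun h => ha.2 (h ▸ hbB)
    exact hbA (M.subset_closure (A \ {a}) (diff_subset.trans hA.subset_ground) ⟨hbmem, hba⟩)
  refine ⟨b, ⟨hbB, hbne⟩, ?_, ?_⟩
  · have hind : M.Indep (insert b (A \ {a})) := by
      rw [(hA.indep.diff _).insert_indep_iff_of_notMem (fun h => hbne h.1)]
      exact ⟨hB.subset_ground hbB, hbA⟩
    exact hA.exchange_isBase_of_indep hbne hind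
  · have hind : M.Indep (insert a (B \ {b})) := by
      rw [(hB.indep.diff _).insert_indep_iff_of_notMem (fun h => ha.2 h.1)]
      exact ⟨hA.subset_ground ha.1, hbcl⟩
    exact hB.exchange_isBase_of_indep ha.2 hind

end BrualdiAux



section Bridge

variable {n : ℕ}

/-- The Mathlib matroid corresponding to a `FinMatroid`. -/
def FinMatroid.toMatroid (M : FinMatroid n) : Matroid (Fin n) :=
  (IndepMatroid.ofFinset Set.univ M.Indep M.empty_indep
    (fun _ _ hJ hIJ => M.indep_subset hJ hIJ)
    (fun I J hI hJ hIJ => by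
      obtain ⟨x, hx, h⟩ := M.exchange hJ hI hIJ
      rw [Finset.mem_sdiff] at hx
      exact ⟨x, hx.1, hx.2, h⟩)
    (fun _ _ => Set.subset_univ _)).matroid

lemma FinMatroid.toMatroid_indep (M : FinMatroid n) (s : Finset (Fin n)) :
    M.toMatroid.Indep ↑s ↔ M.Indep s := by
  simp [FinMatroid.toMatroid, IndepMatroid.ofFinset_indep]

lemma FinMatroid.toMatroid_base (M : FinMatroid n) (s : Finset (Fin n)) :
    M.toMatroid.IsBase ↑s ↔ M.IsBasis s := by
  rw [Matroid.isBase_iff_maximal_indep, FinMatroid.IsBasis]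
  constructor
  · rintro ⟨h1, h2⟩
    rw [M.toMatroid_indep] at h1
    refine ⟨h1, fun J hJ hsJ => ?_⟩
    have hJs : (↑J : Set (Fin n)) ⊆ ↑s :=
      h2 ((M.toMatroid_indep J).2 hJ) (by exact_mod_cast hsJ)
    exact Finset.Subset.antisymm hsJ (by exact_mod_cast hJs)
  · rintro ⟨h1, h2⟩
    refine ⟨(M.toMatroid_indep s).2 h1, fun I hI hsI => ?_⟩
    have hIfin : I.Finite := Set.toFinite I
    have hIJ : M.Indep hIfin.toFinset := by
      have := (M.toMatroid_indep hIfin.toFinset).1 (by rwa [Set.Finite.coe_toFinset])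
      exact this
    have hsub : s ⊆ hIfin.toFinset := by
      intro x hx
      rw [Set.Finite.mem_toFinset]
      exact hsI hx
    have := h2 _ hIJ hsub
    rw [this, Set.Finite.coe_toFinset]

/-- Strong exchange, Finset version. -/
lemma fin_strong_exchange (M : FinMatroid n) {A B : Finset (Fin n)}
    (hA : M.IsBasis A) (hB : M.IsBasis B) {a : Fin n} (ha : a ∈ A \ B) :
    ∃ b ∈ B \ A, M.IsBasis (insert b (A.erase a)) ∧ M.IsBasis (insert a (B.erase b)) := by
  have hA' := (M.toMatroid_base A).2 hA
  have hB' := (M.toMatroid_base B).2 hB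
  rw [Finset.mem_sdiff] at ha
  obtain ⟨b, hb, h1, h2⟩ := BrualdiAux.strong_exchange hA' hB' (Set.toFinite _)
    (show a ∈ (↑A : Set (Fin n)) \ ↑B from ⟨ha.1, fun h => ha.2 (by exact_mod_cast h)⟩)
  have hbB : b ∈ B := by exact_mod_cast hb.1
  have hbA : b ∉ A := fun h => hb.2 (by exact_mod_cast h)
  refine ⟨b, Finset.mem_sdiff.2 ⟨hbB, hbA⟩, ?_, ?_⟩
  · rw [← M.toMatroid_base]
    have : (↑(insert b (A.erase a)) : Set (Fin n)) = insert b (↑A \ {a}) := by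
      push_cast [Finset.coe_erase]; rfl
    rwa [this]
  · rw [← M.toMatroid_base]
    have : (↑(insert a (B.erase b)) : Set (Fin n)) = insert a (↑B \ {b}) := by
      push_cast [Finset.coe_erase]; rfl
    rwa [this]

end Bridge

lemma brualdi_aux {n : ℕ} (M : FinMatroid n) : ∀ (k : ℕ) (A B : Finset (Fin n)),
    (A \ B).card ≤ k → M.IsBasis A → M.IsBasis B →
    ∃ β : Fin n → Fin n,
      Set.BijOn β (A : Set (Fin n)) (B : Set (Fin n)) ∧
      (∀ a ∈ A, M.IsBasis (insert (β a) (A.erase a))) ∧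
      (∀ a ∈ A ∩ B, β a = a) := by
  have eq_case : ∀ (A B : Finset (Fin n)), M.IsBasis A → M.IsBasis B → A \ B = ∅ →
      ∃ β : Fin n → Fin n,
      Set.BijOn β (A : Set (Fin n)) (B : Set (Fin n)) ∧
      (∀ a ∈ A, M.IsBasis (insert (β a) (A.erase a))) ∧
      (∀ a ∈ A ∩ B, β a = a) := by
    intro A B hA hB hempty
    have hAB : A = B := hA.2 B hB.1 (Finset.sdiff_eq_empty_iff_subset.1 hempty)
    subst hAB
    refine ⟨id, Set.bijOn_id _, fun a ha => ?_, fun a _ => rfl⟩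
    simpa [Finset.insert_erase ha] using hA
  intro k
  induction k with
  | zero =>
    intro A B hcard hA hB
    exact eq_case A B hA hB (Finset.card_eq_zero.1 (Nat.le_zero.1 hcard))
  | succ k ih =>
    intro A B hcard hA hB
    rcases Finset.eq_empty_or_nonempty (A \ B) with hempty | ⟨a, ha⟩
    · exact eq_case A B hA hB hempty
    obtain ⟨b, hb, h1, h2⟩ := fin_strong_exchange M hA hB ha
    rw [Finset.mem_sdiff] at ha hb
    have hba : b ≠ a := fun h => ha.2 (h ▸ hb.1)
    set B' : Finset (Fin n) := insert a (B.erase b) with hB'def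
    have haB' : a ∈ B' := Finset.mem_insert_self a _
    have hbB' : b ∉ B' := by
      simp [hB'def, hba]
    have hdiff : A \ B' = (A \ B).erase a := by
      ext x
      simp only [hB'def, Finset.mem_sdiff, Finset.mem_insert, Finset.mem_erase, not_or]
      constructor
      · rintro ⟨hxA, hxa, hxe⟩
        refine ⟨hxa, hxA, fun hxB => hxe ⟨?_, hxB⟩⟩
        rintro rfl; exact hb.2 hxA
      · rintro ⟨hxa, hxA, hxB⟩
        exact ⟨hxA, hxa, fun h => hxB h.2⟩
    have hcard' : (A \ B').card ≤ k := by
      rw [hdiff]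
      have h1c : (A \ B).card ≤ k + 1 := hcard
      have h2c : ((A \ B).erase a).card = (A \ B).card - 1 :=
        Finset.card_erase_of_mem (Finset.mem_sdiff.2 ha)
      omega
    obtain ⟨β', hbij', hexch', hid'⟩ := ih A B' hcard' hA h2
    have hb'a : β' a = a := hid' a (Finset.mem_inter.2 ⟨ha.1, haB'⟩)
    refine ⟨fun x => Equiv.swap a b (β' x), ?_, ?_, ?_⟩
    · have hswap : Set.BijOn (Equiv.swap a b) (B' : Set (Fin n)) (B : Set (Fin n)) := by
        refine ⟨?_, (Equiv.injective _).injOn, ?_⟩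
        · intro x hx
          rcases Finset.mem_insert.1 (by exact_mod_cast hx) with rfl | hx'
          · simpa using hb.1
          · have hxb : x ≠ b := Finset.ne_of_mem_erase hx'
            have hxa : x ≠ a := fun h => ha.2 (h ▸ Finset.mem_of_mem_erase hx')
            rw [Equiv.swap_apply_of_ne_of_ne hxa hxb]
            exact_mod_cast Finset.mem_of_mem_erase hx'
        · intro y hy
          have hyB : y ∈ B := by exact_mod_cast hy
          by_cases hyb : y = b
          · exact ⟨a, by exact_mod_cast haB', by simp [hyb]⟩
          · have hya : y ≠ a := fun h => ha.2 (h ▸ hyB)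
            exact ⟨y, by simp [hB'def, Finset.mem_erase, hyb, hyB],
              Equiv.swap_apply_of_ne_of_ne hya hyb⟩
      exact hswap.comp hbij'
    · intro x hx
      by_cases hxa : x = a
      · subst hxa
        beta_reduce
        rw [hb'a, Equiv.swap_apply_left]
        exact h1
      · have hmem : β' x ∈ B' := by exact_mod_cast hbij'.1 (by exact_mod_cast hx)
        have hne1 : β' x ≠ a := fun h => hxa (hbij'.2.1 (by exact_mod_cast hx)
          (by exact_mod_cast ha.1) (h.trans hb'a.symm))
        have hne2 : β' x ≠ b := fun h => hbB' (h ▸ hmem)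
        beta_reduce
        rw [Equiv.swap_apply_of_ne_of_ne hne1 hne2]
        exact hexch' x hx
    · intro x hx
      rw [Finset.mem_inter] at hx
      have hxb : x ≠ b := fun h => hb.2 (h ▸ hx.1)
      have hxa : x ≠ a := fun h => ha.2 (h ▸ hx.2)
      have hxB' : x ∈ B' := Finset.mem_insert_of_mem (Finset.mem_erase.2 ⟨hxb, hx.2⟩)
      beta_reduce
      rw [hid' x (Finset.mem_inter.2 ⟨hx.1, hxB'⟩),
        Equiv.swap_apply_of_ne_of_ne hxa hxb]

/-- Brualdi's lemma: for bases `A, B` there is a bijection `β : A → B`,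
identity on `A ∩ B`, such that `(A \ {a}) ∪ {β(a)}` is a basis for all `a ∈ A`. -/
theorem brualdi_exchange {n : ℕ} (M : FinMatroid n) (A B : Finset (Fin n))
    (hA : M.IsBasis A) (hB : M.IsBasis B) :
    ∃ β : Fin n → Fin n,
      Set.BijOn β (A : Set (Fin n)) (B : Set (Fin n)) ∧
      (∀ a ∈ A, M.IsBasis (insert (β a) (A.erase a))) ∧
      (∀ a ∈ A ∩ B, β a = a) := by
  exact brualdi_aux M (A \ B).card A B le_rfl hA hB
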